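/- Suppose each I_n is the orthogonal projection of V onto a closed subspace W_n ⊆ V, and that I_n f → f in V for every f ∈ V (so in particular Condition (ii) holds). Then the first Ritz values satisfy liminf_{n→∞} λ̃_n ≥ λ₁, without assuming Condition (iii) (L²-stability). This is the H¹-Galerkin version of the lower-bound theorem. -/

import Mathlib

open Filter Topology
open scoped RealInnerProductSpace

set_option maxHeartbeats 1000000

private lemma ultra_lim_of_compact {X : Type*} [TopologicalSpace X] {K : Set X}
    (hK : IsCompact K) (U : Ultrafilter ℕ) {f : ℕ → X} (hf : ∀ n, f n ∈ K) :
    ∃ x, Tendsto f U (𝓝 x) := by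
  obtain ⟨x, -, hx⟩ := hK.ultrafilter_le_nhds (U.map f)
    (by
      rw [Ultrafilter.coe_map, le_principal_iff, Filter.mem_map]
      exact Filter.univ_mem' hf)
  exact ⟨x, hx⟩

private lemma riesz_rep {V : Type*} [NormedAddCommGroup V] [InnerProductSpace ℝ V]
    [CompleteSpace V] (φ : V →ₗ[ℝ] ℝ) (C : ℝ) (hφ : ∀ w, |φ w| ≤ C * ‖w‖) :
    ∃ z : V, ∀ w, φ w = ⟪z, w⟫ := by
  refine ⟨(InnerProductSpace.toDual ℝ V).symm (φ.mkContinuous C fun w => by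
    simpa using hφ w), fun w => ?_⟩
  rw [InnerProductSpace.toDual_symm_apply]
  rfl

private lemma weak_ultra_limit {V : Type*} [NormedAddCommGroup V] [InnerProductSpace ℝ V]
    [CompleteSpace V] (U : Ultrafilter ℕ) (u : ℕ → V) (R : ℝ) (hu : ∀ n, ‖u n‖ ≤ R) :
    ∃ v : V, ∀ g : V, Tendsto (fun n => ⟪u n, g⟫) U (𝓝 ⟪v, g⟫) := by
  haveI : (U : Filter ℕ).NeBot := U.neBot
  have hlim : ∀ g : V, ∃ c : ℝ, Tendsto (fun n => ⟪u n, g⟫) U (𝓝 c) := by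
    intro g
    refine ultra_lim_of_compact (isCompact_closedBall (0 : ℝ) (R * ‖g‖)) U fun n => ?_
    simp only [Metric.mem_closedBall, dist_zero_right, Real.norm_eq_abs]
    calc |⟪u n, g⟫| ≤ ‖u n‖ * ‖g‖ := abs_real_inner_le_norm _ _
      _ ≤ R * ‖g‖ := mul_le_mul_of_nonneg_right (hu n) (norm_nonneg g)
  choose c hc using hlim
  have hadd : ∀ g₁ g₂, c (g₁ + g₂) = c g₁ + c g₂ := by
    intro g₁ g₂
    refine tendsto_nhds_unique (hc (g₁ + g₂)) ?_
    have := (hc g₁).add (hc g₂)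
    simpa [inner_add_right] using this
  have hsmul : ∀ (r : ℝ) g, c (r • g) = r * c g := by
    intro r g
    refine tendsto_nhds_unique (hc (r • g)) ?_
    have := (hc g).const_mul r
    simpa [real_inner_smul_right] using this
  have hbdd : ∀ g, |c g| ≤ R * ‖g‖ := by
    intro g
    refine le_of_tendsto (hc g).abs (Filter.univ_mem' fun n => ?_)
    calc |⟪u n, g⟫| ≤ ‖u n‖ * ‖g‖ := abs_real_inner_le_norm _ _
      _ ≤ R * ‖g‖ := mul_le_mul_of_nonneg_right (hu n) (norm_nonneg g)
  obtain ⟨v, hv⟩ := riesz_rep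
    { toFun := c, map_add' := hadd,
      map_smul' := fun r g => by simpa using hsmul r g } R hbdd
  exact ⟨v, fun g => by rw [← hv g]; exact hc g⟩

/-- **Lower bound for the first Ritz values in the H¹-Galerkin case.**
If each `I n` is the orthogonal projection of `V` onto a closed subspace `W n`
and `I n f → f` for every `f ∈ V` (so Condition (ii) holds), then
`liminf λ̃ₙ ≥ λ₁`, without assuming Condition (iii). -/
theorem to_ritz_lower_bound_galerkin
    {V H : Type*}
    [NormedAddCommGroup V] [InnerProductSpace ℝ V] [CompleteSpace V]
    [NormedAddCommGroup H] [InnerProductSpace ℝ H] [CompleteSpace H]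
    (ι : V →L[ℝ] H) (hι_inj : Function.Injective ι)
    (hι_cpt : IsCompactOperator ι)
    (a0 a1 : V →ₗ[ℝ] V →ₗ[ℝ] ℝ)
    (ha0_symm : ∀ u v : V, a0 u v = a0 v u)
    (ha1_symm : ∀ u v : V, a1 u v = a1 v u)
    (M : ℝ)
    (ha0_bdd : ∀ u v : V, |a0 u v| ≤ M * ‖u‖ * ‖v‖)
    (ha1_bdd : ∀ u v : V, |a1 u v| ≤ M * ‖u‖ * ‖v‖)
    (α : ℝ) (hα : 0 < α)
    (ha0_coer : ∀ v : V, α * ‖v‖ ^ 2 ≤ a0 v v)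
    (ha1_coer : ∀ v : V, α * ‖v‖ ^ 2 ≤ a1 v v)
    (T : V →ₗ[ℝ] V) (CV CT : ℝ)
    (hT_bdd : ∀ v : V, ‖T v‖ ≤ CV * ‖v‖)
    (hT_H : ∀ v : V, ‖ι (T v)‖ ≤ CT * ‖ι v‖)
    (S : ℕ → Submodule ℝ V) (hS_mono : Monotone S)
    (hS_ne : ∀ n, S n ≠ ⊥) (hS_fd : ∀ n, FiniteDimensional ℝ (S n))
    (lam1 : ℝ)
    (hlam1 : lam1 = sInf {x : ℝ | ∃ v : V, v ≠ 0 ∧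
      x = ((a0 v v + a1 (T v) (T v)) / 2) / ‖ι v‖ ^ 2})
    (hdensity : sInf {x : ℝ | ∃ v : V, (∃ n, v ∈ S n) ∧ v ≠ 0 ∧
      x = ((a0 v v + a1 (T v) (T v)) / 2) / ‖ι v‖ ^ 2} = lam1)
    (I : ℕ → V →ₗ[ℝ] V)
    (lamT : ℕ → ℝ)
    (hlamT : ∀ n, lamT n = sInf {x : ℝ | ∃ v : V, v ∈ S n ∧ v ≠ 0 ∧
      x = ((a0 v v + a1 (I n (T v)) (I n (T v))) / 2) / ‖ι v‖ ^ 2})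
    -- each `I n` is the orthogonal projection onto a closed subspace `W n ⊆ V`
    (W : ℕ → Submodule ℝ V) (hW_closed : ∀ n, IsClosed (W n : Set V))
    (hI_mem : ∀ n (v : V), I n v ∈ W n)
    (hI_orth : ∀ n (v : V), ∀ w ∈ W n, ⟪v - I n v, w⟫ = 0)
    -- `I n f → f` in `V` for every `f ∈ V` (in particular Condition (ii) holds)
    (hI_tendsto : ∀ f : V, Tendsto (fun n => ‖I n f - f‖) atTop (𝓝 0))
    :
    lam1 ≤ liminf lamT atTop := by
  by_contra hcon
  push_neg at hcon
  set L := liminf lamT atTop with hLdef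
  set ε : ℝ := (lam1 - L) / 3 with hεdef
  have hε : 0 < ε := by simp only [hεdef]; linarith
  -- basic nonzero element
  obtain ⟨f, hfS, hf0⟩ := Submodule.exists_mem_ne_zero_of_ne_bot (hS_ne 0)
  have hfn : 0 < ‖f‖ := norm_pos_iff.mpr hf0
  have hM : α ≤ M := by
    have h1 := ha0_coer f
    have h2 := (le_abs_self _).trans (ha0_bdd f f)
    nlinarith [mul_pos hfn hfn, sq_nonneg ‖f‖, sq_abs ‖f‖, (pow_two ‖f‖ : ‖f‖^2 = ‖f‖*‖f‖)]
  have hCV : 0 ≤ CV := by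
    have h1 := hT_bdd f
    have h2 := norm_nonneg (T f)
    nlinarith
  have hιf : ι f ≠ 0 := fun hz => hf0 (hι_inj (by rw [hz, map_zero]))
  have hιfpos : 0 < ‖ι f‖ := norm_pos_iff.mpr hιf
  -- nonnegativity of the forms
  have ha0nn : ∀ v : V, 0 ≤ a0 v v := fun v => le_trans (by positivity) (ha0_coer v)
  have ha1nn : ∀ v : V, 0 ≤ a1 v v := fun v => le_trans (by positivity) (ha1_coer v)
  -- orthogonal projections are contractions and self-adjoint
  have hInorm : ∀ n (w : V), ‖I n w‖ ≤ ‖w‖ := by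
    intro n w
    have h := hI_orth n w (I n w) (hI_mem n w)
    have hsq : ‖w‖ ^ 2 = ‖w - I n w‖ ^ 2 + ‖I n w‖ ^ 2 := by
      have h2 := norm_add_sq_real (w - I n w) (I n w)
      rw [sub_add_cancel] at h2
      rw [h2, h]; ring
    nlinarith [norm_nonneg (w - I n w), norm_nonneg (I n w), norm_nonneg w]
  have hIadj : ∀ n (w g : V), ⟪I n w, g⟫ = ⟪w, I n g⟫ := by
    intro n w g
    have h1 := hI_orth n g (I n w) (hI_mem n w)
    have h2 := hI_orth n w (I n g) (hI_mem n g)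
    rw [inner_sub_left] at h1 h2
    have h3 := real_inner_comm (I n w) g
    have h4 := real_inner_comm (I n g) (I n w)
    linarith
  -- Bounds on lamT
  have hbdd0 : ∀ n, ∀ x ∈ {x : ℝ | ∃ v : V, v ∈ S n ∧ v ≠ 0 ∧
      x = ((a0 v v + a1 (I n (T v)) (I n (T v))) / 2) / ‖ι v‖ ^ 2}, (0:ℝ) ≤ x := by
    rintro n x ⟨v, -, -, rfl⟩
    have := ha0nn v
    have := ha1nn (I n (T v))
    positivity
  have hlamT_nonneg : ∀ n, 0 ≤ lamT n := by
    intro n; rw [hlamT n]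
    exact Real.sInf_nonneg (hbdd0 n)
  set B : ℝ := ((a0 f f + M * (CV * ‖f‖) ^ 2) / 2) / ‖ι f‖ ^ 2 with hBdef
  have hlamT_le : ∀ n, lamT n ≤ B := by
    intro n
    rw [hlamT n]
    have hmem : ((a0 f f + a1 (I n (T f)) (I n (T f))) / 2) / ‖ι f‖ ^ 2 ∈
        {x : ℝ | ∃ v : V, v ∈ S n ∧ v ≠ 0 ∧
          x = ((a0 v v + a1 (I n (T v)) (I n (T v))) / 2) / ‖ι v‖ ^ 2} :=
      ⟨f, hS_mono (Nat.zero_le n) hfS, hf0, rfl⟩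
    refine (csInf_le ⟨0, hbdd0 n⟩ hmem).trans ?_
    have hw : ‖I n (T f)‖ ≤ CV * ‖f‖ := (hInorm n _).trans (hT_bdd f)
    have hMnn : (0:ℝ) ≤ M := hα.le.trans hM
    have ha1b : a1 (I n (T f)) (I n (T f)) ≤ M * (CV * ‖f‖) ^ 2 := by
      have h1 := (le_abs_self _).trans (ha1_bdd (I n (T f)) (I n (T f)))
      have h2 : ‖I n (T f)‖ * ‖I n (T f)‖ ≤ (CV * ‖f‖) * (CV * ‖f‖) :=
        mul_le_mul hw hw (norm_nonneg _) (by positivity)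
      nlinarith [norm_nonneg (I n (T f))]
    rw [hBdef]
    have hd2 : (0:ℝ) ≤ ‖ι f‖ ^ 2 := by positivity
    apply div_le_div_of_nonneg_right ?_ hd2
    linarith [ha1b]
  have hB0 : 0 ≤ B := (hlamT_nonneg 0).trans (hlamT_le 0)
  -- choose near-minimizers, normalized in H
  have hchoice : ∀ n, ∃ u : V, u ∈ S n ∧ ‖ι u‖ = 1 ∧
      a0 u u + a1 (I n (T u)) (I n (T u)) ≤ 2 * (lamT n + ε) := by
    intro n
    obtain ⟨v₀, hv₀S, hv₀0⟩ := Submodule.exists_mem_ne_zero_of_ne_bot (hS_ne n)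
    have hne : Set.Nonempty {x : ℝ | ∃ v : V, v ∈ S n ∧ v ≠ 0 ∧
        x = ((a0 v v + a1 (I n (T v)) (I n (T v))) / 2) / ‖ι v‖ ^ 2} :=
      ⟨_, v₀, hv₀S, hv₀0, rfl⟩
    have hlt : sInf {x : ℝ | ∃ v : V, v ∈ S n ∧ v ≠ 0 ∧
        x = ((a0 v v + a1 (I n (T v)) (I n (T v))) / 2) / ‖ι v‖ ^ 2} < lamT n + ε := by
      rw [← hlamT n]; linarith
    obtain ⟨x, ⟨v, hvS, hv0, rfl⟩, hxlt⟩ := exists_lt_of_csInf_lt hne hlt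
    have hιv : ι v ≠ 0 := fun hz => hv0 (hι_inj (by rw [hz, map_zero]))
    have hd : 0 < ‖ι v‖ := norm_pos_iff.mpr hιv
    set d := ‖ι v‖ with hddef
    refine ⟨d⁻¹ • v, Submodule.smul_mem _ _ hvS, ?_, ?_⟩
    · rw [map_smul, norm_smul, Real.norm_eq_abs, abs_of_pos (inv_pos.mpr hd)]
      field_simp
      exact hddef.symm
    · have hTu : T (d⁻¹ • v) = d⁻¹ • T v := map_smul T _ _
      have h0 : a0 (d⁻¹ • v) (d⁻¹ • v) = d⁻¹ * (d⁻¹ * a0 v v) := by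
        simp [map_smul, LinearMap.smul_apply, smul_eq_mul]
      have h1 : a1 (I n (T (d⁻¹ • v))) (I n (T (d⁻¹ • v)))
          = d⁻¹ * (d⁻¹ * a1 (I n (T v)) (I n (T v))) := by
        rw [hTu, map_smul]
        simp [map_smul, LinearMap.smul_apply, smul_eq_mul]
      rw [h0, h1]
      have hq : d⁻¹ * (d⁻¹ * a0 v v) + d⁻¹ * (d⁻¹ * a1 (I n (T v)) (I n (T v)))
          = 2 * (((a0 v v + a1 (I n (T v)) (I n (T v))) / 2) / d ^ 2) := by
        field_simp
      rw [hq]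
      linarith
  choose uu huuS huuN huuB using hchoice
  -- uniform bound in V
  set R : ℝ := Real.sqrt (2 * (B + ε) / α) with hRdef
  have hR : ∀ n, ‖uu n‖ ≤ R := by
    intro n
    have h1 : α * ‖uu n‖ ^ 2 ≤ 2 * (B + ε) := by
      have h2 := ha0_coer (uu n)
      have h3 := ha1nn (I n (T (uu n)))
      have h4 := huuB n
      have h5 := hlamT_le n
      linarith
    have h6 : (0:ℝ) ≤ 2 * (B + ε) / α := by positivity
    rw [hRdef, Real.le_sqrt (norm_nonneg _) h6, le_div_iff₀ hα]
    linarith [mul_comm (‖uu n‖ ^ 2) α]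
  -- the ultrafilter
  have hcob : Filter.IsCoboundedUnder (· ≥ ·) atTop lamT :=
    (Filter.isBoundedUnder_of ⟨B, fun n => hlamT_le n⟩).isCoboundedUnder_ge
  have hfreq : ∃ᶠ n in atTop, lamT n < L + ε :=
    Filter.frequently_lt_of_liminf_lt hcob (by linarith)
  haveI hne : (atTop ⊓ 𝓟 {n : ℕ | lamT n < L + ε}).NeBot :=
    Filter.frequently_iff_neBot.mp hfreq
  set U : Ultrafilter ℕ := Ultrafilter.of (atTop ⊓ 𝓟 {n : ℕ | lamT n < L + ε}) with hUdef
  haveI : (U : Filter ℕ).NeBot := U.neBot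
  have hUtop : (U : Filter ℕ) ≤ atTop := (Ultrafilter.of_le _).trans inf_le_left
  have hUF : ∀ᶠ n in (U : Filter ℕ), lamT n < L + ε :=
    Filter.le_principal_iff.mp ((Ultrafilter.of_le _).trans inf_le_right)
  -- weak limit of uu
  obtain ⟨v, hweak⟩ := weak_ultra_limit U uu R hR
  -- weak limit of the projected sequence
  set wseq : ℕ → V := fun n => I n (T (uu n)) with hwseqdef
  have hCR : 0 ≤ CV * R := mul_nonneg hCV (Real.sqrt_nonneg _)
  have hTuu : ∀ n, ‖T (uu n)‖ ≤ CV * R := fun n =>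
    (hT_bdd _).trans (mul_le_mul_of_nonneg_left (hR n) hCV)
  have hwseq : ∀ g : V, Tendsto (fun n => ⟪wseq n, g⟫) U (𝓝 ⟪T v, g⟫) := by
    intro g
    have hsplit : ∀ n, ⟪wseq n, g⟫ = ⟪T (uu n), g⟫ + ⟪T (uu n), I n g - g⟫ := by
      intro n
      rw [hwseqdef]
      rw [hIadj n (T (uu n)) g, inner_sub_right]
      ring
    obtain ⟨z, hz⟩ := riesz_rep
      { toFun := fun w => ⟪T w, g⟫,
        map_add' := fun x y => by simp [map_add, inner_add_left],
        map_smul' := fun r x => by simp [map_smul, real_inner_smul_left] }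
      (CV * ‖g‖) (fun w => by
        calc |⟪T w, g⟫| ≤ ‖T w‖ * ‖g‖ := abs_real_inner_le_norm _ _
          _ ≤ (CV * ‖w‖) * ‖g‖ := mul_le_mul_of_nonneg_right (hT_bdd w) (norm_nonneg g)
          _ = CV * ‖g‖ * ‖w‖ := by ring)
    have main1 : Tendsto (fun n => ⟪T (uu n), g⟫) U (𝓝 ⟪T v, g⟫) := by
      have heq : (fun n => ⟪T (uu n), g⟫) = fun n => ⟪uu n, z⟫ := funext fun n => by
        rw [show (⟪T (uu n), g⟫ : ℝ) = ⟪z, uu n⟫ from hz (uu n), real_inner_comm]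
      have heq2 : (⟪T v, g⟫ : ℝ) = ⟪v, z⟫ := by
        rw [show (⟪T v, g⟫ : ℝ) = ⟪z, v⟫ from hz v, real_inner_comm]
      rw [heq, heq2]
      exact hweak z
    have main2 : Tendsto (fun n => ⟪T (uu n), I n g - g⟫) U (𝓝 0) := by
      apply squeeze_zero_norm (a := fun n => (CV * R) * ‖I n g - g‖)
      · intro n
        rw [Real.norm_eq_abs]
        calc |⟪T (uu n), I n g - g⟫| ≤ ‖T (uu n)‖ * ‖I n g - g‖ := abs_real_inner_le_norm _ _
          _ ≤ (CV * R) * ‖I n g - g‖ := mul_le_mul_of_nonneg_right (hTuu n) (norm_nonneg _)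
      · have := ((hI_tendsto g).mono_left hUtop).const_mul (CV * R)
        simpa using this
    have := main1.add main2
    rw [add_zero] at this
    exact this.congr fun n => (hsplit n).symm
  -- strong limit of ι ∘ uu in H and norm identification
  have hnorm1 : ‖ι v‖ = 1 := by
    have hball : ∀ n, uu n ∈ Metric.closedBall (0 : V) R := fun n => by
      simpa [Metric.mem_closedBall, dist_zero_right] using hR n
    have hKcpt : IsCompact (closure ((ι : V →ₗ[ℝ] H) '' Metric.closedBall 0 R)) :=
      IsCompactOperator.isCompact_closure_image_of_bounded (f := (ι : V →ₗ[ℝ] H)) hι_cpt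
        Metric.isBounded_closedBall
    obtain ⟨h, hh⟩ := ultra_lim_of_compact hKcpt U (f := fun n => ι (uu n))
      (fun n => subset_closure ⟨uu n, hball n, rfl⟩)
    have hident : ∀ y : H, (⟪ι v, y⟫ : ℝ) = ⟪h, y⟫ := by
      intro y
      obtain ⟨z, hz⟩ := riesz_rep
        { toFun := fun w => ⟪ι w, y⟫,
          map_add' := fun x₁ x₂ => by simp [map_add, inner_add_left],
          map_smul' := fun r x₁ => by simp [map_smul, real_inner_smul_left] }
        (‖ι‖ * ‖y‖) (fun w => by
          calc |⟪ι w, y⟫| ≤ ‖ι w‖ * ‖y‖ := abs_real_inner_le_norm _ _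
            _ ≤ (‖ι‖ * ‖w‖) * ‖y‖ := mul_le_mul_of_nonneg_right (ι.le_opNorm w) (norm_nonneg y)
            _ = ‖ι‖ * ‖y‖ * ‖w‖ := by ring)
      have l1 : Tendsto (fun n => (⟪ι (uu n), y⟫ : ℝ)) U (𝓝 ⟪h, y⟫) :=
        hh.inner tendsto_const_nhds
      have l2 : Tendsto (fun n => (⟪ι (uu n), y⟫ : ℝ)) U (𝓝 ⟪ι v, y⟫) := by
        have heq : (fun n => (⟪ι (uu n), y⟫ : ℝ)) = fun n => ⟪uu n, z⟫ := funext fun n => by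
          rw [show (⟪ι (uu n), y⟫ : ℝ) = ⟪z, uu n⟫ from hz (uu n), real_inner_comm]
        have heq2 : (⟪ι v, y⟫ : ℝ) = ⟪v, z⟫ := by
          rw [show (⟪ι v, y⟫ : ℝ) = ⟪z, v⟫ from hz v, real_inner_comm]
        rw [heq, heq2]
        exact hweak z
      exact tendsto_nhds_unique l2 l1
    have hhv : h = ι v := by
      have h2 := hident (ι v - h)
      have h3 : (⟪ι v - h, ι v - h⟫ : ℝ) = 0 := by
        rw [inner_sub_left]; linarith
      have h4 : ι v - h = 0 := inner_self_eq_zero.mp h3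
      rw [sub_eq_zero] at h4
      exact h4.symm
    have l3 : Tendsto (fun _ : ℕ => (1:ℝ)) U (𝓝 ‖h‖) := by
      have := hh.norm
      simpa [huuN] using this
    have h5 : ‖h‖ = 1 := tendsto_nhds_unique l3 tendsto_const_nhds
    rw [hhv] at h5
    exact h5
  have hv0 : v ≠ 0 := by
    intro hz
    rw [hz, map_zero, norm_zero] at hnorm1
    exact zero_ne_one hnorm1
  -- lower semicontinuity
  have key0 : ∀ n, a0 v v ≤ a0 (uu n) (uu n) - 2 * a0 v (uu n - v) := by
    intro n
    have hc := ha0_coer (uu n - v)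
    have hexp : a0 (uu n - v) (uu n - v)
        = a0 (uu n) (uu n) - 2 * a0 v (uu n - v) - a0 v v := by
      have hs := ha0_symm (uu n) v
      simp only [map_sub, LinearMap.sub_apply]
      linarith
    nlinarith [sq_nonneg ‖uu n - v‖, mul_nonneg hα.le (sq_nonneg ‖uu n - v‖)]
  have key1 : ∀ n, a1 (T v) (T v) ≤ a1 (wseq n) (wseq n) - 2 * a1 (T v) (wseq n - T v) := by
    intro n
    have hc := ha1_coer (wseq n - T v)
    have hexp : a1 (wseq n - T v) (wseq n - T v)
        = a1 (wseq n) (wseq n) - 2 * a1 (T v) (wseq n - T v) - a1 (T v) (T v) := by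
      have hs := ha1_symm (wseq n) (T v)
      simp only [map_sub, LinearMap.sub_apply]
      linarith
    nlinarith [mul_nonneg hα.le (sq_nonneg ‖wseq n - T v‖)]
  have tend0 : Tendsto (fun n => a0 v (uu n - v)) U (𝓝 0) := by
    obtain ⟨z0, hz0⟩ := riesz_rep (a0 v) (M * ‖v‖) (fun w => ha0_bdd v w)
    have heq : (fun n => a0 v (uu n - v)) = fun n => ⟪uu n, z0⟫ - ⟪v, z0⟫ := by
      funext n
      rw [map_sub, hz0, hz0, real_inner_comm z0 (uu n), real_inner_comm z0 v]
    rw [heq]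
    simpa using (hweak z0).sub (tendsto_const_nhds (x := (⟪v, z0⟫ : ℝ)))
  have tend1 : Tendsto (fun n => a1 (T v) (wseq n - T v)) U (𝓝 0) := by
    obtain ⟨z1, hz1⟩ := riesz_rep (a1 (T v)) (M * ‖T v‖) (fun w => ha1_bdd (T v) w)
    have heq : (fun n => a1 (T v) (wseq n - T v)) = fun n => ⟪wseq n, z1⟫ - ⟪T v, z1⟫ := by
      funext n
      rw [map_sub, hz1, hz1, real_inner_comm z1 (wseq n), real_inner_comm z1 (T v)]
    rw [heq]
    simpa using (hwseq z1).sub (tendsto_const_nhds (x := (⟪T v, z1⟫ : ℝ)))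
  -- pass to the limit
  have hev : ∀ᶠ n in (U : Filter ℕ), a0 v v + a1 (T v) (T v)
      ≤ 2 * (L + 2 * ε) - (2 * a0 v (uu n - v) + 2 * a1 (T v) (wseq n - T v)) := by
    filter_upwards [hUF] with n hn
    have h1 := key0 n
    have h2 := key1 n
    have h3 := huuB n
    linarith
  have htend : Tendsto (fun n => 2 * (L + 2 * ε)
      - (2 * a0 v (uu n - v) + 2 * a1 (T v) (wseq n - T v))) U (𝓝 (2 * (L + 2 * ε))) := by
    have := ((tend0.const_mul 2).add (tend1.const_mul 2))
    simpa using tendsto_const_nhds.sub this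
  have hfin : a0 v v + a1 (T v) (T v) ≤ 2 * (L + 2 * ε) := ge_of_tendsto htend hev
  -- conclude
  have hmem : ((a0 v v + a1 (T v) (T v)) / 2) / ‖ι v‖ ^ 2 ∈
      {x : ℝ | ∃ v : V, v ≠ 0 ∧ x = ((a0 v v + a1 (T v) (T v)) / 2) / ‖ι v‖ ^ 2} :=
    ⟨v, hv0, rfl⟩
  have hbl : BddBelow {x : ℝ | ∃ v : V, v ≠ 0 ∧
      x = ((a0 v v + a1 (T v) (T v)) / 2) / ‖ι v‖ ^ 2} := by
    refine ⟨0, ?_⟩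
    rintro x ⟨w, -, rfl⟩
    have := ha0nn w
    have := ha1nn (T w)
    positivity
  have hle : lam1 ≤ ((a0 v v + a1 (T v) (T v)) / 2) / ‖ι v‖ ^ 2 := by
    rw [hlam1]; exact csInf_le hbl hmem
  rw [hnorm1] at hle
  simp only [one_pow, div_one] at hle
  have : lam1 ≤ L + 2 * ε := by linarith
  rw [hεdef] at this
  linarith
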